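/- Let X be a countable set and w : X → ℝ≥0 a proper weight function. If φ : X → ℂ is such that for every nondecreasing function f : ℝ≥0 → ℝ with strictly positive values the family x ↦ |φ(x)| · f(w(x)) is summable, then φ has finite support. (This identifies H_{B_max,w}(X) with the space of finitely supported functions, Proposition 1.2.3(ii).) -/

import Mathlib

open NNReal

/-- **Proposition 1.2.3(ii).** If `w` is a proper weight function on a countable set `X`
and `φ : X → ℂ` is such that for every nondecreasing positive `f : ℝ≥0 → ℝ` the family
`x ↦ |φ x| * f (w x)` is summable, then `φ` has finite support. -/
theorem stmt_0 {X : Type*} [Countable X] (w : X → ℝ≥0)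
    (hw : ∀ C : ℝ≥0, {x : X | w x ≤ C}.Finite)
    (φ : X → ℂ)
    (h : ∀ f : ℝ≥0 → ℝ, Monotone f → (∀ t, 0 < f t) →
      Summable fun x => ‖φ x‖ * f (w x)) :
    (Function.support φ).Finite := by
  by_contra hfin
  replace hfin : (Function.support φ).Infinite := hfin
  set E := hfin.natEmbedding with hE
  set x : ℕ → X := fun n => (E n : X) with hxdef
  have hx : Function.Injective x := fun a b hab => E.injective (Subtype.ext hab)
  have hmem : ∀ n, x n ∈ Function.support φ := fun n => (E n).2
  have hS : ∀ t : ℝ≥0, ({n : ℕ | w (x n) ≤ t}).Finite := by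
    intro t
    have : {n : ℕ | w (x n) ≤ t} = x ⁻¹' {y : X | w y ≤ t} := rfl
    rw [this]
    exact (hw t).preimage (hx.injOn)
  set f : ℝ≥0 → ℝ := fun t => 1 + ∑ n ∈ (hS t).toFinset, (‖φ (x n)‖)⁻¹
    with hf
  have hmono : Monotone f := by
    intro a b hab
    apply add_le_add_right
    apply Finset.sum_le_sum_of_subset_of_nonneg
    · intro n hn
      simp only [Set.Finite.mem_toFinset, Set.mem_setOf_eq] at hn ⊢
      exact hn.trans hab
    · intro i _ _
      positivity
  have hpos : ∀ t, 0 < f t := by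
    intro t
    have : (0:ℝ) ≤ ∑ n ∈ (hS t).toFinset, (‖φ (x n)‖)⁻¹ :=
      Finset.sum_nonneg fun i _ => by positivity
    simp only [hf]
    linarith
  have key : ∀ n, 1 ≤ ‖φ (x n)‖ * f (w (x n)) := by
    intro n
    have ha : 0 < ‖φ (x n)‖ := by
      simpa [AbsoluteValue.pos_iff] using hmem n
    have hterm : (‖φ (x n)‖)⁻¹ ≤ f (w (x n)) := by
      have hn : n ∈ (hS (w (x n))).toFinset := by
        simp [Set.Finite.mem_toFinset]
      have hle : (‖φ (x n)‖)⁻¹ ≤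
          ∑ m ∈ (hS (w (x n))).toFinset, (‖φ (x m)‖)⁻¹ :=
        Finset.single_le_sum (f := fun m => (‖φ (x m)‖)⁻¹) (fun i _ => by positivity) hn
      simp only [hf]
      linarith
    calc (1:ℝ) = ‖φ (x n)‖ * (‖φ (x n)‖)⁻¹ := by
          rw [mul_inv_cancel₀ ha.ne']
      _ ≤ ‖φ (x n)‖ * f (w (x n)) := by
          exact mul_le_mul_of_nonneg_left hterm ha.le
  have hsum := h f hmono hpos
  have hz := hsum.tendsto_cofinite_zero
  have hev : ∀ᶠ y in Filter.cofinite, ‖φ y‖ * f (w y) < 1 := by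
    exact hz.eventually_lt_const one_pos
  rw [Filter.eventually_cofinite] at hev
  have hTinf : {y : X | ¬ ‖φ y‖ * f (w y) < 1}.Infinite :=
    Set.infinite_of_injective_forall_mem (f := x) hx
      (fun n => by simpa using not_lt.mpr (key n))
  exact hTinf hev
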